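/- Let P be a finite bounded graded poset that is not a lattice. Then there exist elements a, b, w ∈ P such that a and b both cover w and the join a ∨ b does not exist in P. -/

import Mathlib

section Aux
variable {P : Type*} [Fintype P] [PartialOrder P] [BoundedOrder P]

lemma bez_exists_cover_le {a b : P} (h : a < b) : ∃ c, a ⋖ c ∧ c ≤ b := by
  have hwf : WellFounded ((· < ·) : P → P → Prop) := (Finite.to_wellFoundedLT).wf
  obtain ⟨c, ⟨hac, hcb⟩, hmin⟩ := hwf.has_min {x : P | a < x ∧ x ≤ b} ⟨b, h, le_rfl⟩
  refine ⟨c, ⟨hac, fun z haz hzc => ?_⟩, hcb⟩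
  exact hmin z ⟨haz, hzc.le.trans hcb⟩ hzc

lemma bez_rho_lt (ρ : P → ℕ) (hρ : ∀ a b : P, a ⋖ b → ρ b = ρ a + 1)
    {a b : P} (h : a < b) : ρ a < ρ b := by
  have hwf : WellFounded ((· > ·) : P → P → Prop) := (Finite.to_wellFoundedGT).wf
  induction a using WellFounded.induction hwf with
  | _ a ih =>
    obtain ⟨c, hac, hcb⟩ := bez_exists_cover_le h
    rcases eq_or_lt_of_le hcb with rfl | hlt
    · rw [hρ a c hac]; omega
    · have := ih c hac.lt hlt
      have := hρ a c hac
      omega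

lemma bez_isLUB_pair_right {a b : P} (h : a ≤ b) : IsLUB ({a, b} : Set P) b := by
  constructor
  · rintro x (rfl | rfl)
    · exact h
    · exact le_rfl
  · intro x hx; exact hx (by simp)

lemma bez_isLUB_pair_left {a b : P} (h : b ≤ a) : IsLUB ({a, b} : Set P) a := by
  constructor
  · rintro x (rfl | rfl)
    · exact le_rfl
    · exact h
  · intro x hx; exact hx (by simp)

lemma bez_join (ρ : P → ℕ) (hρ : ∀ a b : P, a ⋖ b → ρ b = ρ a + 1)
    (H : ∀ w a b : P, w ⋖ a → w ⋖ b → ∃ s, IsLUB ({a, b} : Set P) s) :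
    ∀ (n : ℕ) (w a b : P), ρ ⊤ - ρ w ≤ n → w ≤ a → w ≤ b →
      ∃ s, IsLUB ({a, b} : Set P) s := by
  intro n
  induction n with
  | zero =>
    intro w a b hn hwa hwb
    rcases eq_or_lt_of_le hwa with rfl | hlt
    · exact ⟨b, bez_isLUB_pair_right hwb⟩
    · exfalso
      have h1 : ρ w < ρ a := bez_rho_lt ρ hρ hlt
      have h2 : ρ a ≤ ρ ⊤ := by
        rcases eq_or_lt_of_le (le_top : a ≤ ⊤) with rfl | h
        · exact le_rfl
        · exact (bez_rho_lt ρ hρ h).le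
      omega
  | succ n ih =>
    intro w a b hn hwa hwb
    rcases eq_or_lt_of_le hwa with rfl | hlta
    · exact ⟨b, bez_isLUB_pair_right hwb⟩
    rcases eq_or_lt_of_le hwb with rfl | hltb
    · exact ⟨a, bez_isLUB_pair_left hwa⟩
    obtain ⟨a₁, ha₁, ha₁a⟩ := bez_exists_cover_le hlta
    obtain ⟨b₁, hb₁, hb₁b⟩ := bez_exists_cover_le hltb
    obtain ⟨c, hc⟩ := H w a₁ b₁ ha₁ hb₁
    have ha₁c : a₁ ≤ c := hc.1 (by simp)
    have hb₁c : b₁ ≤ c := hc.1 (by simp)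
    have hrank : ∀ x : P, w ⋖ x → ρ ⊤ - ρ x ≤ n := by
      intro x hx
      have := hρ w x hx
      omega
    obtain ⟨d, hd⟩ := ih a₁ a c (hrank a₁ ha₁) ha₁a ha₁c
    have had : a ≤ d := hd.1 (by simp)
    have hcd : c ≤ d := hd.1 (by simp)
    obtain ⟨e, he⟩ := ih b₁ b d (hrank b₁ hb₁) hb₁b (hb₁c.trans hcd)
    have hbe : b ≤ e := he.1 (by simp)
    have hde : d ≤ e := he.1 (by simp)
    refine ⟨e, ⟨?_, ?_⟩⟩
    · rintro x (rfl | rfl)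
      · exact had.trans hde
      · exact hbe
    · intro x hx
      have hxa : a ≤ x := hx (by simp)
      have hxb : b ≤ x := hx (by simp)
      have hxc : c ≤ x := hc.2 (by rintro y (rfl | rfl); exacts [ha₁a.trans hxa, hb₁b.trans hxb])
      have hxd : d ≤ x := hd.2 (by rintro y (rfl | rfl); exacts [hxa, hxc])
      exact he.2 (by rintro y (rfl | rfl); exacts [hxb, hxd])

lemma bez_finset_lub (Hpair : ∀ a b : P, ∃ s, IsLUB ({a, b} : Set P) s) :
    ∀ s : Finset P, ∃ x, IsLUB (↑s : Set P) x := by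
  classical
  intro s
  induction s using Finset.induction_on with
  | empty => exact ⟨⊥, by simpa using (isLUB_empty : IsLUB (∅ : Set P) ⊥)⟩
  | insert _ _ hni ih =>
    rename_i a s
    obtain ⟨x, hx⟩ := ih
    obtain ⟨y, hy⟩ := Hpair a x
    refine ⟨y, ⟨?_, ?_⟩⟩
    · intro z hz
      rw [Finset.coe_insert, Set.mem_insert_iff] at hz
      rcases hz with rfl | hz
      · exact hy.1 (by simp)
      · exact (hx.1 hz).trans (hy.1 (by simp))
    · intro z hz
      have haz : a ≤ z := hz (by simp)
      have hxz : x ≤ z := hx.2 (fun u hu => hz (by simp [hu]))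
      exact hy.2 (by rintro u (rfl | rfl); exacts [haz, hxz])

end Aux

/-- Contrapositive of the covering lemma: a finite bounded graded poset that is not a
lattice contains two elements covering a common element whose join does not exist. -/
theorem not_lattice_covering (P : Type*) [Fintype P] [PartialOrder P] [BoundedOrder P]
    (ρ : P → ℕ) (hρ : ∀ a b : P, a ⋖ b → ρ b = ρ a + 1)
    (hnot : ¬ ∀ a b : P, (∃ s, IsLUB ({a, b} : Set P) s) ∧ (∃ i, IsGLB ({a, b} : Set P) i)) :
    ∃ a b w : P, w ⋖ a ∧ w ⋖ b ∧ ¬ ∃ s, IsLUB ({a, b} : Set P) s := by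
  classical
  by_contra hcon
  push_neg at hcon
  have H : ∀ w a b : P, w ⋖ a → w ⋖ b → ∃ s, IsLUB ({a, b} : Set P) s := by
    intro w a b h1 h2
    by_contra h
    exact h (hcon a b w h1 h2)
  have Hpair : ∀ a b : P, ∃ s, IsLUB ({a, b} : Set P) s := fun a b =>
    bez_join ρ hρ H (ρ ⊤ - ρ ⊥) ⊥ a b le_rfl bot_le bot_le
  apply hnot
  intro a b
  refine ⟨Hpair a b, ?_⟩
  obtain ⟨i, hi⟩ := bez_finset_lub Hpair
    (Finset.univ.filter (fun x => x ≤ a ∧ x ≤ b))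
  refine ⟨i, ⟨?_, ?_⟩⟩
  · rintro x (rfl | rfl)
    · exact hi.2 (fun u hu => by simp at hu; exact hu.1)
    · exact hi.2 (fun u hu => by simp at hu; exact hu.2)
  · intro x hx
    have hxa : x ≤ a := hx (by simp)
    have hxb : x ≤ b := hx (by simp)
    exact hi.1 (by simp [hxa, hxb])
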